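/- Let G be a finite group. Then the number of conjugacy classes of maximal cyclic subgroups of G is at least the number of maximal cyclic subgroups of the center Z(G). -/

import Mathlib

def IsMaximalCyclic {G : Type*} [Group G] (H : Subgroup G) : Prop :=
  IsCyclic H ∧ ∀ K : Subgroup G, IsCyclic K → H ≤ K → H = K

def conjClass {G : Type*} [Group G] (H : Subgroup G) : Set (Subgroup G) :=
  {K | ∃ g : G, K = H.map (MulAut.conj g).toMonoidHom}

/-- The number of conjugacy classes of maximal cyclic subgroups of `G`. -/
noncomputable def eta (G : Type*) [Group G] : ℕ :=
  (conjClass '' {H : Subgroup G | IsMaximalCyclic H}).ncard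

lemma isCyclic_of_le {G : Type*} [Group G] {H K : Subgroup G} (h : H ≤ K)
    (hK : IsCyclic K) : IsCyclic H :=
  isCyclic_of_surjective _ (Subgroup.subgroupOfEquivOfLe h).surjective

lemma exists_maximalCyclic {G : Type*} [Group G] [Finite G] (K : Subgroup G)
    (hK : IsCyclic K) : ∃ M, IsMaximalCyclic M ∧ K ≤ M := by
  have hfin : ({L : Subgroup G | IsCyclic L ∧ K ≤ L}).Finite := Set.toFinite _
  obtain ⟨M, hM, hmax⟩ := Set.Finite.exists_maximalFor id _ hfin ⟨K, hK, le_refl K⟩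
  exact ⟨M, ⟨hM.1, fun L hL hML => le_antisymm hML (hmax ⟨hL, hM.2.trans hML⟩ hML)⟩, hM.2⟩

lemma isCyclic_subgroupOf {G : Type*} [Group G] {M : Subgroup G} (hM : IsCyclic M)
    (Z : Subgroup G) : IsCyclic (M.subgroupOf Z) := by
  have h1 : (M.subgroupOf Z).map Z.subtype ≤ M := by
    rw [Subgroup.subgroupOf]
    exact Subgroup.map_comap_le _ _
  have h2 : IsCyclic ((M.subgroupOf Z).map Z.subtype) := isCyclic_of_le h1 hM
  exact isCyclic_of_surjective _
    ((M.subgroupOf Z).equivMapOfInjective Z.subtype Z.subtype_injective).symm.surjective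

lemma conj_inf_center {G : Type*} [Group G] (M : Subgroup G) (g : G) :
    (M.map (MulAut.conj g).toMonoidHom) ⊓ Subgroup.center G = M ⊓ Subgroup.center G := by
  ext x
  simp only [Subgroup.mem_inf]
  constructor <;> rintro ⟨h1, h2⟩ <;> refine ⟨?_, h2⟩
  · have hmem := Subgroup.mem_map_equiv.1 h1
    have hx : (MulAut.conj g).symm x = x := by
      simp only [MulAut.conj_symm_apply]
      rw [mul_assoc, ← Subgroup.mem_center_iff.1 h2 g]
      group
    rwa [hx] at hmem
  · refine Subgroup.mem_map_equiv.2 ?_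
    have hx : (MulAut.conj g).symm x = x := by
      simp only [MulAut.conj_symm_apply]
      rw [mul_assoc, ← Subgroup.mem_center_iff.1 h2 g]
      group
    rwa [hx]

lemma subgroupOf_eq_of_inf_eq {G : Type*} [Group G] {M₁ M₂ Z : Subgroup G}
    (h : M₁ ⊓ Z = M₂ ⊓ Z) : M₁.subgroupOf Z = M₂.subgroupOf Z := by
  have key : ∀ M : Subgroup G, M.subgroupOf Z = (M ⊓ Z).subgroupOf Z := by
    intro M
    rw [Subgroup.subgroupOf, Subgroup.subgroupOf, Subgroup.comap_inf]
    have : Subgroup.comap Z.subtype Z = ⊤ := Subgroup.subgroupOf_self Z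
    rw [this, inf_top_eq]
  rw [key M₁, key M₂, h]

theorem stmt13 {G : Type*} [Group G] [Finite G] :
    eta G ≥ {H : Subgroup ↥(Subgroup.center G) | IsMaximalCyclic H}.ncard := by
  classical
  set Z := Subgroup.center G with hZ
  set S := {H : Subgroup ↥Z | IsMaximalCyclic H} with hS
  have key : ∀ X : Subgroup ↥Z, ∃ M : Subgroup G,
      X ∈ S → IsMaximalCyclic M ∧ X.map Z.subtype ≤ M := by
    intro X
    by_cases hX : X ∈ S
    · obtain ⟨M, h1, h2⟩ := exists_maximalCyclic (X.map Z.subtype)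
        (isCyclic_of_surjective _
          (X.equivMapOfInjective Z.subtype Z.subtype_injective).surjective (hH := hX.1))
      exact ⟨M, fun _ => ⟨h1, h2⟩⟩
    · exact ⟨⊥, fun h => absurd h hX⟩
  choose M hM using key
  have hrec : ∀ X ∈ S, X = (M X).subgroupOf Z := by
    intro X hX
    have h1 : X ≤ (M X).subgroupOf Z := by
      rw [Subgroup.subgroupOf, ← Subgroup.map_le_iff_le_comap]
      exact (hM X hX).2
    exact hX.2 _ (isCyclic_subgroupOf (hM X hX).1.1 Z) h1
  have hmapsTo : ∀ X ∈ S, conjClass (M X) ∈ conjClass '' {H : Subgroup G | IsMaximalCyclic H} :=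
    fun X hX => ⟨M X, (hM X hX).1, rfl⟩
  have hinj : Set.InjOn (fun X => conjClass (M X)) S := by
    intro X₁ h₁ X₂ h₂ heq
    have hmem : M X₂ ∈ conjClass (M X₂) := ⟨1, by
      ext x
      simp [Subgroup.mem_map_equiv]⟩
    simp only at heq
    rw [← heq] at hmem
    obtain ⟨g, hg⟩ := hmem
    have hinf : M X₂ ⊓ Z = M X₁ ⊓ Z := by
      rw [hg, hZ]
      exact conj_inf_center _ _
    rw [hrec X₁ h₁, hrec X₂ h₂]
    exact (subgroupOf_eq_of_inf_eq hinf).symm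
  have := Set.ncard_le_ncard_of_injOn (fun X => conjClass (M X)) hmapsTo hinj
    (Set.toFinite _)
  exact this
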